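/- For every partition π = (n_1,...,n_d) of n (with d addends), the set 𝒫_π of canonical plane matrices of type π is an affine plane in the ℂ-linear space Mat(n,n,ℂ): there exist a fixed matrix S ∈ Mat(n,n,ℂ) and a ℂ-linear subspace V ⊆ Mat(n,n,ℂ) with dim V = d such that 𝒫_π = S + V. -/

import Mathlib

/- Common setup: canonical plane matrices (P. Daugulis, "A parametrization of
matrix conjugacy orbit sets as unions of affine planes"). -/

open Matrix Polynomial

noncomputable section

/-- `ℕ`-indexed entries of the generalized companion matrix `R_l(y₁,...,y_l)`:
subdiagonal entries `1`, last column given (via Vieta) by the coefficients of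
`∏ (X - yᵢ)` (entry in row `k` of the last column is
`(−1)^{l+1−k}·e_{l+1−k}(y)`), all other entries `0`. -/
def genCompE (l : ℕ) (y : Fin l → ℂ) (i j : ℕ) : ℂ :=
  if i < l ∧ j < l then
    (if i = j + 1 then 1
     else if j = l - 1 then -((∏ k, (X - C (y k))).coeff i)
     else 0)
  else 0

/-- The generalized companion matrix `R_l(y₁,...,y_l)`, i.e. the companion
matrix of `∏ (X - yᵢ)`. -/
def genComp (l : ℕ) (y : Fin l → ℂ) : Matrix (Fin l) (Fin l) ℂ :=
  Matrix.of fun i j => genCompE l y i j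

/-- A partition of `n`, recorded by its stacks: `t` stacks, with strictly
decreasing positive distinct values `m 0 > m 1 > ... > m (t-1)` and positive
lengths `l j`, so that the partition consists of `l j` copies of `m j` and
`n = ∑ j, l j * m j`. -/
structure StackPartition (n : ℕ) where
  t : ℕ
  m : Fin t → ℕ
  l : Fin t → ℕ
  m_pos : ∀ j, 0 < m j
  l_pos : ∀ j, 0 < l j
  m_strictAnti : ∀ i j : Fin t, i < j → m j < m i
  sum_eq : (∑ j, l j * m j) = n

namespace StackPartition

variable {n : ℕ} (P : StackPartition n)

/-- `m j` extended by `0` beyond the number of stacks (`0`-indexed), so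
`mE 0 = m_1` and `mE t = m_{t+1} = 0` in the paper's notation. -/
def mE (j : ℕ) : ℕ := if h : j < P.t then P.m ⟨j, h⟩ else 0

/-- Row/column offset of the `j`-th diagonal block (`0`-indexed):
`S j = ∑_{i<j} l i * m i`. -/
def S (j : ℕ) : ℕ := ∑ i : Fin P.t, if (i : ℕ) < j then P.l i * P.m i else 0

/-- `sE j = ∑_{i<j} l i`; the paper's `s_j` (for `1`-indexed `j`) is `sE j`. -/
def sE (j : ℕ) : ℕ := ∑ i : Fin P.t, if (i : ℕ) < j then P.l i else 0

/-- The multiset of addends of the partition. -/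
def parts : Multiset ℕ := ∑ j : Fin P.t, Multiset.replicate (P.l j) (P.m j)

/-- Offsets for the direct sum `⊕_j (m_j - m_{j+1}) G_j`. -/
def T (k : ℕ) : ℕ :=
  ∑ i : Fin P.t, if (i : ℕ) < k then (P.m i - P.mE ((i : ℕ) + 1)) * P.sE ((i : ℕ) + 1) else 0

end StackPartition

/-- Parameters `λ_{j,1},...,λ_{j,l_j}` for each stack `j`. -/
def Params {n : ℕ} (P : StackPartition n) := (j : Fin P.t) → Fin (P.l j) → ℂ

/-- `ℕ`-indexed entry of the canonical plane matrix of type `P` with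
parameters `lam`: the `j`-th diagonal block (of size `l j * m j`, occupying
rows and columns `[S j, S (j+1))`) is `R_{l j}(lam j) ⊗ E_{m j}` (row index
`a` of the block encodes the pair `(a / m j, a % m j)`), the block directly
below it occupies the first `m (j+1)` rows of block `j+1` and the last `m j`
columns of block `j` and equals `[O | E_{m (j+1)}]`, and all other entries
vanish. -/
def cpmEntry {n : ℕ} (P : StackPartition n) (lam : Params P) (r c : ℕ) : ℂ :=
  (∑ j : Fin P.t,
    if P.S j ≤ r ∧ r < P.S ((j : ℕ) + 1) ∧ P.S j ≤ c ∧ c < P.S ((j : ℕ) + 1)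
        ∧ (r - P.S j) % P.m j = (c - P.S j) % P.m j then
      genCompE (P.l j) (lam j) ((r - P.S j) / P.m j) ((c - P.S j) / P.m j)
    else 0)
  +
  (∑ j : Fin P.t,
    if P.S ((j : ℕ) + 1) ≤ r ∧ r < P.S ((j : ℕ) + 1) + P.mE ((j : ℕ) + 1)
        ∧ P.S ((j : ℕ) + 1) - P.m j ≤ c ∧ c < P.S ((j : ℕ) + 1)
        ∧ c - (P.S ((j : ℕ) + 1) - P.m j)
            = (P.m j - P.mE ((j : ℕ) + 1)) + (r - P.S ((j : ℕ) + 1)) then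
      (1 : ℂ)
    else 0)

/-- The canonical plane matrix of type `P` with parameters `lam`. -/
def cpm {n : ℕ} (P : StackPartition n) (lam : Params P) : Matrix (Fin n) (Fin n) ℂ :=
  Matrix.of fun r c => cpmEntry P lam r c

/-- The set `𝒫_π` of canonical plane matrices of type `P`. -/
def planeSet {n : ℕ} (P : StackPartition n) : Set (Matrix (Fin n) (Fin n) ℂ) :=
  { A | ∃ lam : Params P, A = cpm P lam }

/-- Similarity (conjugacy) of square complex matrices. -/
def MatrixSimilar {n : ℕ} (A B : Matrix (Fin n) (Fin n) ℂ) : Prop :=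
  ∃ Q : Matrix (Fin n) (Fin n) ℂ, IsUnit Q.det ∧ A * Q = Q * B

/-- The `A`-cyclic subspace `ℂ[A]·v`, spanned by `v, Av, A²v, ...`. -/
def cyclicSpan {n : ℕ} (A : Matrix (Fin n) (Fin n) ℂ) (v : Fin n → ℂ) :
    Submodule ℂ (Fin n → ℂ) :=
  Submodule.span ℂ (Set.range fun k : ℕ => (A ^ k) *ᵥ v)

/-- `ℕ`-indexed entry of the matrix
`G_j = ⊕_{i≤j} C(a_{i,0},...,a_{i,l_i−1}) + Σ_{i<j} E_{s_i+1,s_i}`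
(`0`-indexed `j`; the `i`-th diagonal block is the companion matrix of
`∏_k (X - λ_{i,k})`, and the matrix units sit just below the lower-left
corners of the diagonal blocks). -/
def GEntry {n : ℕ} (P : StackPartition n) (lam : Params P) (j r c : ℕ) : ℂ :=
  (∑ i : Fin P.t,
    if (i : ℕ) ≤ j ∧ P.sE i ≤ r ∧ r < P.sE ((i : ℕ) + 1)
        ∧ P.sE i ≤ c ∧ c < P.sE ((i : ℕ) + 1) then
      genCompE (P.l i) (lam i) (r - P.sE i) (c - P.sE i)
    else 0)
  +
  (∑ i : Fin P.t,
    if 1 ≤ (i : ℕ) ∧ (i : ℕ) ≤ j ∧ r = P.sE i ∧ c + 1 = P.sE i then (1 : ℂ) else 0)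

/-- The `s_j × s_j` matrix `G_j` (`0`-indexed `j`, of size `sE (j+1)`). -/
def Gm {n : ℕ} (P : StackPartition n) (lam : Params P) (j : Fin P.t) :
    Matrix (Fin (P.sE ((j : ℕ) + 1))) (Fin (P.sE ((j : ℕ) + 1))) ℂ :=
  Matrix.of fun r c => GEntry P lam j r c

/-- The multiset `[λ_{j,1},...,λ_{j,l_j}]` of stack `j`. -/
def stackMultiset {n : ℕ} (P : StackPartition n) (lam : Params P) (j : Fin P.t) :
    Multiset ℂ :=
  Multiset.map (lam j) Finset.univ.val

/-- `μ(z, j)`: multiplicity of `z` in the multiset `[λ_{j,1},...,λ_{j,l_j}]`. -/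
def mu {n : ℕ} (P : StackPartition n) (lam : Params P) (z : ℂ) (j : Fin P.t) : ℕ :=
  (stackMultiset P lam j).count z

/-- The multiset of all parameters of stacks `0,...,j` (`0`-indexed), so
`α(z, j) = (lamUpTo P lam j).count z`. -/
def lamUpTo {n : ℕ} (P : StackPartition n) (lam : Params P) (j : ℕ) : Multiset ℂ :=
  ∑ i : Fin P.t, if (i : ℕ) ≤ j then stackMultiset P lam i else 0

/-- Index type for the direct sum of one Jordan block per distinct element of a
multiset `s`, the block for `z` having size `s.count z`. -/
abbrev JordanIdx (s : Multiset ℂ) : Type := Σ z : s.toFinset, Fin (s.count z.val)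

/-- The direct sum `⊕_z J_{s.count z}(z)` over the distinct elements `z` of the
multiset `s` (lower Jordan blocks: eigenvalue on the diagonal, ones on the
subdiagonal). -/
def jordanOfMultiset (s : Multiset ℂ) : Matrix (JordanIdx s) (JordanIdx s) ℂ :=
  Matrix.of fun x y =>
    if x.1 = y.1 then
      (if (x.2 : ℕ) = (y.2 : ℕ) then x.1.val
       else if (x.2 : ℕ) = (y.2 : ℕ) + 1 then 1 else 0)
    else 0

/-- `0`-indexed Weyr characteristic: `weyr B z i = ω_{i+1}` where
`ω_k = dim ker (B - zI)^k − dim ker (B - zI)^{k-1}`. -/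
def weyr {n : ℕ} (B : Matrix (Fin n) (Fin n) ℂ) (z : ℂ) (i : ℕ) : ℕ :=
  Module.finrank ℂ (LinearMap.ker ((B - z • 1).mulVecLin ^ (i + 1)))
    - Module.finrank ℂ (LinearMap.ker ((B - z • 1).mulVecLin ^ i))

/-- `ℕ`-indexed entry of the block diagonal matrix `⊕_j (m_j - m_{j+1}) G_j`
(for each `j`, exactly `m j - m (j+1)` consecutive copies of `G_j`). -/
def dsEntry {n : ℕ} (P : StackPartition n) (lam : Params P) (r c : ℕ) : ℂ :=
  ∑ j : Fin P.t,
    if P.T j ≤ r ∧ r < P.T ((j : ℕ) + 1) ∧ P.T j ≤ c ∧ c < P.T ((j : ℕ) + 1)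
        ∧ (r - P.T j) / P.sE ((j : ℕ) + 1) = (c - P.T j) / P.sE ((j : ℕ) + 1) then
      GEntry P lam j ((r - P.T j) % P.sE ((j : ℕ) + 1)) ((c - P.T j) % P.sE ((j : ℕ) + 1))
    else 0

/-- Index type for `⊕_{j=1}^{t} (m_j - m_{j+1}) (⊕_z J_{α(z,j)}(z))`. -/
abbrev FullJordanIdx {n : ℕ} (P : StackPartition n) (lam : Params P) : Type :=
  Σ j : Fin P.t, Fin (P.m j - P.mE ((j : ℕ) + 1)) × JordanIdx (lamUpTo P lam (j : ℕ))

/-- The matrix `⊕_{j=1}^{t} (m_j - m_{j+1}) (⊕_z J_{α(z,j)}(z))`: for each `j`,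
`m j - m (j+1)` copies of the direct sum, over the distinct `z` with
`α(z,j) = μ(z,1) + ... + μ(z,j) > 0`, of the Jordan blocks `J_{α(z,j)}(z)`. -/
def fullJordan {n : ℕ} (P : StackPartition n) (lam : Params P) :
    Matrix (FullJordanIdx P lam) (FullJordanIdx P lam) ℂ :=
  Matrix.of fun x y =>
    if h : x.1 = y.1 then
      (fun y2 : Fin (P.m x.1 - P.mE ((x.1 : ℕ) + 1)) × JordanIdx (lamUpTo P lam (x.1 : ℕ)) =>
        if x.2.1 = y2.1 then jordanOfMultiset (lamUpTo P lam (x.1 : ℕ)) x.2.2 y2.2 else 0)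
      (cast (congrArg (fun j : Fin P.t =>
        Fin (P.m j - P.mE ((j : ℕ) + 1)) × JordanIdx (lamUpTo P lam (j : ℕ))) h.symm) y.2)
    else 0

end

noncomputable section Aux
open StackPartition

lemma exists_prod_coeff (l : ℕ) (w : Fin l → ℂ) :
    ∃ y : Fin l → ℂ, ∀ i : Fin l, (∏ k, (X - C (y k))).coeff i = w i := by
  set p : ℂ[X] := X ^ l + ∑ i : Fin l, C (w i) * X ^ (i : ℕ) with hp
  have hdeg : (∑ i : Fin l, C (w i) * X ^ (i : ℕ)).degree < (l : WithBot ℕ) := by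
    apply lt_of_le_of_lt (Polynomial.degree_sum_le _ _)
    rw [Finset.sup_lt_iff (by exact_mod_cast WithBot.bot_lt_coe l)]
    intro i _
    apply lt_of_le_of_lt (Polynomial.degree_C_mul_X_pow_le _ _)
    exact_mod_cast i.isLt
  have hm : p.Monic := Polynomial.monic_X_pow_add hdeg
  have hdp : p.natDegree = l := by
    have : p.degree = l := by
      rw [hp, Polynomial.degree_add_eq_left_of_degree_lt (by simpa using hdeg)]
      simp
    simpa [Polynomial.degree_eq_natDegree hm.ne_zero, Nat.cast_inj] using this
  have hs : p.Splits := IsAlgClosed.splits p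
  have hroots : p.roots.card = l := by
    rw [Polynomial.splits_iff_card_roots.mp hs, hdp]
  have hL : p.roots.toList.length = l := by
    rw [Multiset.length_toList, hroots]
  refine ⟨fun k => p.roots.toList.get (Fin.cast hL.symm k), fun i => ?_⟩
  have hprod : (∏ k : Fin l, (X - C (p.roots.toList.get (Fin.cast hL.symm k)))) = p := by
    have h1 : (∏ k : Fin l, (X - C (p.roots.toList.get (Fin.cast hL.symm k))))
        = ∏ k : Fin p.roots.toList.length, (X - C (p.roots.toList.get k)) :=
      Fintype.prod_equiv (finCongr hL.symm) _ _ (fun k => rfl)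
    rw [h1, ← List.prod_ofFn]
    have h2 : (List.ofFn fun k => X - C (p.roots.toList.get k))
        = p.roots.toList.map (fun a => X - C a) := by
      rw [← List.ofFn_get p.roots.toList, List.map_ofFn]
      simp [Function.comp]
    rw [h2]
    calc (List.map (fun a => X - C a) p.roots.toList).prod
        = ((p.roots.toList : Multiset ℂ).map (fun a => X - C a)).prod := by
          rw [Multiset.map_coe, Multiset.prod_coe]
      _ = (p.roots.map (fun a => X - C a)).prod := by rw [Multiset.coe_toList]
      _ = p := (hs.eq_prod_roots_of_monic hm).symm
  rw [hprod, hp]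
  rw [Polynomial.coeff_add, Polynomial.coeff_X_pow, Polynomial.finset_sum_coeff]
  have : ∀ j : Fin l, (C (w j) * X ^ (j:ℕ)).coeff i = if j = i then w j else 0 := by
    intro j
    rw [Polynomial.coeff_C_mul, Polynomial.coeff_X_pow]
    by_cases h : j = i
    · simp [h]
    · have h2 : ¬((i:ℕ) = (j:ℕ)) := fun hh => h (Fin.ext hh.symm)
      simp [h, h2]
  rw [Finset.sum_congr rfl (fun j _ => this j)]
  have hil : ¬((i:ℕ) = l) := Nat.ne_of_lt i.isLt
  simp [Finset.sum_ite_eq', hil]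

variable {n : ℕ} (P : StackPartition n)

/-- The block-diagonal position condition. -/
def bc (j : Fin P.t) (r c : ℕ) : Prop :=
  P.S j ≤ r ∧ r < P.S ((j : ℕ) + 1) ∧ P.S j ≤ c ∧ c < P.S ((j : ℕ) + 1)
    ∧ (r - P.S j) % P.m j = (c - P.S j) % P.m j

instance (j : Fin P.t) (r c : ℕ) : Decidable (bc P j r c) := by
  unfold bc; infer_instance

lemma S_mono : Monotone P.S := by
  intro a b hab
  apply Finset.sum_le_sum
  intro i _
  by_cases h : (i : ℕ) < a
  · simp [h, lt_of_lt_of_le h hab]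
  · simp [h]

lemma S_succ (j : Fin P.t) : P.S ((j : ℕ) + 1) = P.S j + P.l j * P.m j := by
  unfold StackPartition.S
  have : ∀ i : Fin P.t, (if (i : ℕ) < (j : ℕ) + 1 then P.l i * P.m i else 0)
      = (if (i : ℕ) < (j : ℕ) then P.l i * P.m i else 0)
        + (if i = j then P.l i * P.m i else 0) := by
    intro i
    rcases lt_trichotomy (i : ℕ) (j : ℕ) with h | h | h
    · have h1 : (i : ℕ) < (j : ℕ) + 1 := by omega
      have h2 : i ≠ j := fun hh => by simp [hh] at h
      simp [h, h1, h2]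
    · have h1 : i = j := Fin.ext h
      simp [h1]
    · have h1 : ¬((i : ℕ) < (j : ℕ) + 1) := by omega
      have h2 : ¬((i : ℕ) < (j : ℕ)) := by omega
      have h3 : i ≠ j := fun hh => by simp [hh] at h
      simp [h1, h2, h3]
  rw [Finset.sum_congr rfl (fun i _ => this i), Finset.sum_add_distrib,
    Finset.sum_ite_eq' Finset.univ j]
  simp

lemma S_top : P.S P.t = n := by
  calc P.S P.t = ∑ i : Fin P.t, P.l i * P.m i :=
        Finset.sum_congr rfl (fun i _ => by simp [StackPartition.S, i.isLt])
    _ = n := P.sum_eq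

lemma S_succ_le (j : Fin P.t) : P.S ((j : ℕ) + 1) ≤ n :=
  le_trans (S_mono P j.isLt) (le_of_eq (S_top P))

lemma bc_disjoint {j j' : Fin P.t} (hne : j ≠ j') {r : ℕ}
    (h1 : P.S j ≤ r) (h2 : r < P.S ((j : ℕ) + 1))
    (h3 : P.S j' ≤ r) (h4 : r < P.S ((j' : ℕ) + 1)) : False := by
  rcases lt_or_gt_of_ne (fun h => hne (Fin.ext h) : (j : ℕ) ≠ (j' : ℕ)) with h | h
  · have := S_mono P (show (j : ℕ) + 1 ≤ (j' : ℕ) from h)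
    omega
  · have := S_mono P (show (j' : ℕ) + 1 ≤ (j : ℕ) from h)
    omega

/-- The constant part of the canonical plane matrix. -/
def baseE (l a b : ℕ) : ℂ := if a < l ∧ b < l ∧ a = b + 1 then 1 else 0

def Smat : Matrix (Fin n) (Fin n) ℂ :=
  Matrix.of fun r c : Fin n =>
    (∑ j : Fin P.t, if bc P j r c then
        baseE (P.l j) (((r : ℕ) - P.S j) / P.m j) (((c : ℕ) - P.S j) / P.m j) else 0)
    + (∑ j : Fin P.t,
      if P.S ((j : ℕ) + 1) ≤ (r : ℕ) ∧ (r : ℕ) < P.S ((j : ℕ) + 1) + P.mE ((j : ℕ) + 1)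
          ∧ P.S ((j : ℕ) + 1) - P.m j ≤ (c : ℕ) ∧ (c : ℕ) < P.S ((j : ℕ) + 1)
          ∧ (c : ℕ) - (P.S ((j : ℕ) + 1) - P.m j)
              = (P.m j - P.mE ((j : ℕ) + 1)) + ((r : ℕ) - P.S ((j : ℕ) + 1)) then
        (1 : ℂ)
      else 0)

/-- The basis matrices of the linear part. -/
def Emat (p : Σ j : Fin P.t, Fin (P.l j)) : Matrix (Fin n) (Fin n) ℂ :=
  Matrix.of fun r c : Fin n =>
    if bc P p.1 r c ∧ ((r : ℕ) - P.S p.1) / P.m p.1 = (p.2 : ℕ)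
        ∧ ((c : ℕ) - P.S p.1) / P.m p.1 = P.l p.1 - 1 then 1 else 0

/-- The coefficients extracted from the parameters. -/
def coeffMap (lam : Params P) (p : Σ j : Fin P.t, Fin (P.l j)) : ℂ :=
  -((∏ k, (X - C (lam p.1 k))).coeff (p.2 : ℕ))

lemma genCompE_decomp (l : ℕ) (y : Fin l → ℂ) (a b : ℕ) (ha : a < l) (hb : b < l) :
    genCompE l y a b = baseE l a b
      + ∑ i : Fin l, (-((∏ k, (X - C (y k))).coeff (i : ℕ)))
          * (if a = (i : ℕ) ∧ b = l - 1 then 1 else 0) := by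
  by_cases hbl : b = l - 1
  · have hne : ¬(a = b + 1) := by omega
    have hsum : (∑ i : Fin l, (-((∏ k, (X - C (y k))).coeff (i : ℕ)))
          * (if a = (i : ℕ) ∧ b = l - 1 then 1 else 0))
        = -((∏ k, (X - C (y k))).coeff a) := by
      rw [Finset.sum_eq_single (⟨a, ha⟩ : Fin l)]
      · simp [hbl]
      · intro i _ hne2
        have : ¬(a = (i : ℕ)) := fun h => hne2 (Fin.ext h.symm)
        simp [this]
      · intro h; exact absurd (Finset.mem_univ _) h
    rw [hsum]
    have hne2 : ¬(a = l - 1 + 1) := by omega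
    unfold genCompE baseE
    simp [ha, hb, hne, hbl, hne2]
    exact fun h0 => absurd hb (by omega)
  · have hsum : (∑ i : Fin l, (-((∏ k, (X - C (y k))).coeff (i : ℕ)))
          * (if a = (i : ℕ) ∧ b = l - 1 then 1 else 0)) = 0 :=
      Finset.sum_eq_zero (fun i _ => by simp [hbl])
    rw [hsum, add_zero]
    unfold genCompE baseE
    split_ifs <;> first | rfl | omega

lemma cpm_decomp (lam : Params P) :
    cpm P lam = Smat P + ∑ p : Σ j : Fin P.t, Fin (P.l j), coeffMap P lam p • Emat P p := by
  ext r c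
  show cpmEntry P lam r c = _
  unfold cpmEntry
  rw [Matrix.add_apply]
  have hsum : (∑ p : Σ j : Fin P.t, Fin (P.l j), coeffMap P lam p • Emat P p) r c
      = ∑ j : Fin P.t, ∑ i : Fin (P.l j), coeffMap P lam ⟨j, i⟩ * Emat P ⟨j, i⟩ r c := by
    rw [Matrix.sum_apply, ← Finset.univ_sigma_univ, Finset.sum_sigma]
    rfl
  rw [hsum]
  show _ = ((_ : ℂ) + _) + _
  rw [add_right_comm]
  congr 1
  rw [← Finset.sum_add_distrib]
  apply Finset.sum_congr rfl
  intro j _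
  by_cases hb : bc P j (r : ℕ) (c : ℕ)
  · have hb' : P.S j ≤ (r : ℕ) ∧ (r : ℕ) < P.S ((j : ℕ) + 1) ∧ P.S j ≤ (c : ℕ)
        ∧ (c : ℕ) < P.S ((j : ℕ) + 1)
        ∧ ((r : ℕ) - P.S j) % P.m j = ((c : ℕ) - P.S j) % P.m j := hb
    obtain ⟨h1, h2, h3, h4, h5⟩ := hb'
    have hm := P.m_pos j
    have hl := P.l_pos j
    have hS := S_succ P j
    have ha : ((r : ℕ) - P.S j) / P.m j < P.l j :=
      (Nat.div_lt_iff_lt_mul hm).mpr (by omega)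
    have hbb : ((c : ℕ) - P.S j) / P.m j < P.l j :=
      (Nat.div_lt_iff_lt_mul hm).mpr (by omega)
    rw [if_pos (show _ ∧ _ ∧ _ ∧ _ ∧ _ from ⟨h1, h2, h3, h4, h5⟩), if_pos hb]
    have hE : ∀ i : Fin (P.l j), Emat P ⟨j, i⟩ r c
        = if ((r : ℕ) - P.S j) / P.m j = (i : ℕ)
            ∧ ((c : ℕ) - P.S j) / P.m j = P.l j - 1 then 1 else 0 := by
      intro i
      show (if _ then _ else _) = _
      by_cases h : ((r : ℕ) - P.S j) / P.m j = (i : ℕ)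
          ∧ ((c : ℕ) - P.S j) / P.m j = P.l j - 1
      · rw [if_pos ⟨hb, h.1, h.2⟩, if_pos h]
      · rw [if_neg (fun hh => h ⟨hh.2.1, hh.2.2⟩), if_neg h]
    rw [Finset.sum_congr rfl (fun i _ => by rw [hE i])]
    rw [genCompE_decomp (P.l j) (lam j) _ _ ha hbb]
    rfl
  · have hb' : ¬(P.S j ≤ (r : ℕ) ∧ (r : ℕ) < P.S ((j : ℕ) + 1) ∧ P.S j ≤ (c : ℕ)
        ∧ (c : ℕ) < P.S ((j : ℕ) + 1)
        ∧ ((r : ℕ) - P.S j) % P.m j = ((c : ℕ) - P.S j) % P.m j) := hb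
    rw [if_neg hb', if_neg hb]
    simp [Emat, hb]

lemma Emat_linIndep : LinearIndependent ℂ (Emat P) := by
  rw [Fintype.linearIndependent_iff]
  intro g hg p
  obtain ⟨j, i⟩ := p
  have hm := P.m_pos j
  have hl := P.l_pos j
  have hS := S_succ P j
  have him : (i : ℕ) * P.m j < P.l j * P.m j := mul_lt_mul_of_pos_right i.isLt hm
  have hlm : (P.l j - 1) * P.m j < P.l j * P.m j :=
    mul_lt_mul_of_pos_right (by omega) hm
  have hSle := S_succ_le P j
  have hr0 : P.S j + (i : ℕ) * P.m j < n := by omega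
  have hc0 : P.S j + (P.l j - 1) * P.m j < n := by omega
  have hent := congrFun (congrFun hg ⟨P.S j + (i : ℕ) * P.m j, hr0⟩)
    ⟨P.S j + (P.l j - 1) * P.m j, hc0⟩
  rw [Matrix.sum_apply, Matrix.zero_apply] at hent
  have e1 : P.S j + (i : ℕ) * P.m j - P.S j = (i : ℕ) * P.m j := by omega
  have e2 : P.S j + (P.l j - 1) * P.m j - P.S j = (P.l j - 1) * P.m j := by omega
  have hbc : bc P j (P.S j + (i : ℕ) * P.m j) (P.S j + (P.l j - 1) * P.m j) := by
    refine ⟨by omega, by omega, by omega, by omega, ?_⟩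
    rw [e1, e2, Nat.mul_mod_left, Nat.mul_mod_left]
  have hd1 : (P.S j + (i : ℕ) * P.m j - P.S j) / P.m j = (i : ℕ) := by
    rw [e1, Nat.mul_div_cancel _ hm]
  have hd2 : (P.S j + (P.l j - 1) * P.m j - P.S j) / P.m j = P.l j - 1 := by
    rw [e2, Nat.mul_div_cancel _ hm]
  have hone : Emat P ⟨j, i⟩ ⟨P.S j + (i : ℕ) * P.m j, hr0⟩
      ⟨P.S j + (P.l j - 1) * P.m j, hc0⟩ = 1 := if_pos ⟨hbc, hd1, hd2⟩
  have hsum : (∑ p : Σ j : Fin P.t, Fin (P.l j),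
      (g p • Emat P p) ⟨P.S j + (i : ℕ) * P.m j, hr0⟩
        ⟨P.S j + (P.l j - 1) * P.m j, hc0⟩) = g ⟨j, i⟩ := by
    rw [Finset.sum_eq_single (⟨j, i⟩ : Σ j : Fin P.t, Fin (P.l j))]
    · rw [Matrix.smul_apply, hone, smul_eq_mul, mul_one]
    · rintro ⟨j', i'⟩ _ hne
      rw [Matrix.smul_apply]
      by_cases hj : j' = j
      · subst hj
        have hii : ¬(i' = i) := fun h => hne (by rw [h])
        have hzero : Emat P ⟨j', i'⟩ ⟨P.S j' + (i : ℕ) * P.m j', hr0⟩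
            ⟨P.S j' + (P.l j' - 1) * P.m j', hc0⟩ = 0 := by
          apply if_neg
          rintro ⟨-, hd, -⟩
          simp only [Fin.val_mk] at hd
          rw [show P.S j' + (i : ℕ) * P.m j' - P.S j' = (i : ℕ) * P.m j' by omega,
            Nat.mul_div_cancel _ (P.m_pos j')] at hd
          exact hii (Fin.ext hd.symm)
        rw [hzero, smul_zero]
      · have hzero : Emat P ⟨j', i'⟩ ⟨P.S j + (i : ℕ) * P.m j, hr0⟩
            ⟨P.S j + (P.l j - 1) * P.m j, hc0⟩ = 0 := by
          apply if_neg
          rintro ⟨⟨b1, b2, -, -, -⟩, -, -⟩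
          simp only [Fin.val_mk] at b1 b2
          exact bc_disjoint P hj b1 b2 (by omega) (by omega)
        rw [hzero, smul_zero]
    · intro h; exact absurd (Finset.mem_univ _) h
  rw [hsum] at hent
  exact hent

end Aux

/-- For every partition `π = (n₁,...,n_d)` of `n` (with
`d = ∑ j, l j` addends), the set `𝒫_π` of canonical plane matrices of type `π`
is an affine plane in `Mat(n,n,ℂ)`: there are a fixed matrix `S` and a
`ℂ`-linear subspace `V` with `dim V = d` such that `𝒫_π = S + V`. -/
theorem statement0 (n : ℕ) (hn : 2 ≤ n) (P : StackPartition n) :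
    ∃ (S : Matrix (Fin n) (Fin n) ℂ) (V : Submodule ℂ (Matrix (Fin n) (Fin n) ℂ)),
      Module.finrank ℂ V = (∑ j, P.l j) ∧
      planeSet P = (fun M => S + M) '' (V : Set (Matrix (Fin n) (Fin n) ℂ)) := by
  classical
  refine ⟨Smat P, Submodule.span ℂ (Set.range (Emat P)), ?_, ?_⟩
  · rw [finrank_span_eq_card (Emat_linIndep P)]
    simp
  · ext A
    constructor
    · rintro ⟨lam, rfl⟩
      exact ⟨∑ p, coeffMap P lam p • Emat P p,
        Submodule.sum_mem _ (fun p _ =>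
          Submodule.smul_mem _ _ (Submodule.subset_span ⟨p, rfl⟩)),
        (cpm_decomp P lam).symm⟩
    · rintro ⟨M, hM, rfl⟩
      obtain ⟨g, hg⟩ := (Submodule.mem_span_range_iff_exists_fun ℂ).mp hM
      choose y hy using fun j : Fin P.t =>
        exists_prod_coeff (P.l j) (fun i => -(g ⟨j, i⟩))
      refine ⟨y, ?_⟩
      show Smat P + M = cpm P y
      rw [cpm_decomp P y, ← hg]
      congr 1
      apply Finset.sum_congr rfl
      rintro ⟨j, i⟩ _
      have h1 := hy j i
      show g ⟨j, i⟩ • Emat P ⟨j, i⟩ = coeffMap P y ⟨j, i⟩ • Emat P ⟨j, i⟩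
      congr 1
      unfold coeffMap
      rw [h1, neg_neg]
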